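/- If a quiver Q admits a cut, then every maximal weak cut of Q is a cut, and Q admits an R-charge. Conversely, if Q admits an R-charge, then every maximal weak cut is a cut. Hence the following are equivalent: (i) Q admits a cut; (ii) Q admits an R-charge; (iii) every maximal weak cut of Q is a cut. -/

import Mathlib

open Relation

/-- One directed step along an arrow of the quiver. -/
def QStep {V A : Type} (s t : A → V) (i j : V) : Prop := ∃ a : A, s a = i ∧ t a = j

/-- One undirected step along an arrow of the quiver. -/
def UStep {V A : Type} (s t : A → V) (i j : V) : Prop :=
  ∃ a : A, (s a = i ∧ t a = j) ∨ (s a = j ∧ t a = i)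

/-- A current is conserved if at each vertex the incoming total equals the outgoing total. -/
def Conserved {V A : Type} [Fintype A] [DecidableEq V] (s t : A → V) (lam : A → ℝ) : Prop :=
  ∀ i : V, ∑ a ∈ Finset.univ.filter (fun a => t a = i), lam a
         = ∑ a ∈ Finset.univ.filter (fun a => s a = i), lam a

/-- A simple oriented cycle of the quiver: a nonempty cyclically composable list of arrows
whose sources are pairwise distinct. -/
structure SimpleCycle {V A : Type} (s t : A → V) where
  arrows : List A
  nonempty : arrows ≠ []
  chain : ∀ k : ℕ, ∀ h : k < arrows.length,
    t (arrows.get ⟨k, h⟩) =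
      s (arrows.get ⟨(k + 1) % arrows.length, Nat.mod_lt _ (List.length_pos_iff.mpr nonempty)⟩)
  simple : (arrows.map s).Nodup

/-- A cut: every simple oriented cycle contains exactly one arrow of `I`. -/
def IsCut {V A : Type} [DecidableEq A] (s t : A → V) (I : Finset A) : Prop :=
  ∀ w : SimpleCycle s t, (w.arrows.filter (fun a => decide (a ∈ I))).length = 1

/-- A weak cut: every simple oriented cycle contains at most one arrow of `I`. -/
def IsWeakCut {V A : Type} [DecidableEq A] (s t : A → V) (I : Finset A) : Prop :=
  ∀ w : SimpleCycle s t, (w.arrows.filter (fun a => decide (a ∈ I))).length ≤ 1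

/-- An R-charge: a real function on arrows summing to 2 around every simple oriented cycle. -/
def IsRCharge {V A : Type} (s t : A → V) (R : A → ℝ) : Prop :=
  ∀ w : SimpleCycle s t, (w.arrows.map R).sum = 2

namespace Aux10

variable {V A : Type} (s t : A → V)

lemma arrows_nodup (w : SimpleCycle s t) : w.arrows.Nodup := w.simple.of_map

/-- one-step rotation identity -/
lemma map_t_eq_rotate (w : SimpleCycle s t) :
    w.arrows.map t = (w.arrows.map s).rotate 1 := by
  have hlen : (w.arrows.map t).length = ((w.arrows.map s).rotate 1).length := by
    simp
  apply List.ext_get hlen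
  intro k h1 h2
  have hk : k < w.arrows.length := by simpa using h1
  have hpos : 0 < w.arrows.length := List.length_pos_iff.mpr w.nonempty
  rw [List.get_rotate]
  simp only [List.get_eq_getElem, List.getElem_map]
  have := w.chain k hk
  simpa using this

lemma map_perm (w : SimpleCycle s t) : (w.arrows.map t).Perm (w.arrows.map s) := by
  rw [map_t_eq_rotate]
  exact List.rotate_perm _ _

end Aux10

namespace Aux10
variable {V A : Type} (s t : A → V)

section
variable [DecidableEq A]

noncomputable def cyc (w : SimpleCycle s t) : A → ℤ := fun a => if a ∈ w.arrows then 1 else 0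

lemma cyc_nonneg (w : SimpleCycle s t) (a : A) : 0 ≤ cyc s t w a := by
  unfold cyc; split <;> simp

lemma cyc_le_one (w : SimpleCycle s t) (a : A) : cyc s t w a ≤ 1 := by
  unfold cyc; split <;> simp

lemma sum_cyc_filter [Fintype A] (w : SimpleCycle s t) (p : A → Prop) [DecidablePred p] :
    ∑ a ∈ Finset.univ.filter p, cyc s t w a
      = ((w.arrows.filter (fun a => decide (p a))).length : ℤ) := by
  classical
  unfold cyc
  rw [Finset.sum_ite, Finset.sum_const, Finset.sum_const]
  simp only [nsmul_eq_mul, mul_one, mul_zero, add_zero, smul_zero]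
  congr 1
  have h1 : (Finset.univ.filter p).filter (fun a => a ∈ w.arrows)
      = (w.arrows.filter (fun a => decide (p a))).toFinset := by
    ext a
    simp [and_comm]
  rw [h1, List.toFinset_card_of_nodup]
  exact (arrows_nodup s t w).filter _

omit [DecidableEq A] in
lemma filter_length_st (w : SimpleCycle s t) (i : V) [DecidableEq V] :
    (w.arrows.filter (fun a => decide (t a = i))).length
      = (w.arrows.filter (fun a => decide (s a = i))).length := by
  have h1 : ∀ (f : A → V), (w.arrows.filter (fun a => decide (f a = i))).length
      = ((w.arrows.map f).filter (fun v => decide (v = i))).length := by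
    intro f
    induction w.arrows with
    | nil => simp
    | cons x xs ih => by_cases h : f x = i <;> simp [h, ih]
  rw [h1, h1]
  exact ((map_perm s t w).filter _).length_eq

end
end Aux10

namespace Aux10
variable {V A : Type} [Fintype V] [Fintype A] [DecidableEq V] [DecidableEq A] (s t : A → V)

def DivFree (F : A → ℤ) : Prop :=
  ∀ i : V, ∑ a ∈ Finset.univ.filter (fun a => t a = i), F a
         = ∑ a ∈ Finset.univ.filter (fun a => s a = i), F a

lemma cyc_divfree (w : SimpleCycle s t) : DivFree s t (cyc s t w) := by
  intro i
  rw [sum_cyc_filter, sum_cyc_filter, filter_length_st]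

lemma DivFree.sub {F G : A → ℤ} (hF : DivFree s t F) (hG : DivFree s t G) :
    DivFree s t (fun a => F a - G a) := by
  intro i
  rw [Finset.sum_sub_distrib, Finset.sum_sub_distrib, hF i, hG i]

lemma DivFree.finsetSum {ι : Type*} (u : Finset ι) (F : ι → A → ℤ)
    (h : ∀ j ∈ u, DivFree s t (F j)) : DivFree s t (fun a => ∑ j ∈ u, F j a) := by
  intro i
  calc ∑ a ∈ Finset.univ.filter (fun a => t a = i), ∑ j ∈ u, F j a
      = ∑ j ∈ u, ∑ a ∈ Finset.univ.filter (fun a => t a = i), F j a := Finset.sum_comm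
    _ = ∑ j ∈ u, ∑ a ∈ Finset.univ.filter (fun a => s a = i), F j a :=
        Finset.sum_congr rfl fun j hj => h j hj i
    _ = ∑ a ∈ Finset.univ.filter (fun a => s a = i), ∑ j ∈ u, F j a := Finset.sum_comm.symm

/-- evaluation of a cycle indicator against a real weight -/
lemma sum_cyc_mul (w : SimpleCycle s t) (g : A → ℝ) :
    ∑ a : A, (cyc s t w a : ℝ) * g a = (w.arrows.map g).sum := by
  unfold cyc
  have h : ∀ a : A, (Int.cast (if a ∈ w.arrows then (1:ℤ) else 0) : ℝ) * g a
      = if a ∈ w.arrows.toFinset then g a else 0 := by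
    intro a; by_cases hm : a ∈ w.arrows <;> simp [hm]
  rw [Finset.sum_congr rfl fun a _ => h a, Finset.sum_ite_mem]
  rw [Finset.univ_inter, List.sum_toFinset _ (arrows_nodup s t w)]

lemma sum_cyc (w : SimpleCycle s t) : ∑ a : A, cyc s t w a = (w.arrows.length : ℤ) := by
  have := sum_cyc_filter s t w (fun _ => True)
  simpa using this

end Aux10

namespace Aux10
variable {V A : Type} [Fintype V] [Fintype A] [DecidableEq V] [DecidableEq A] (s t : A → V)

lemma exists_cycle_le (F : A → ℤ) (hdf : DivFree s t F) (hnn : ∀ a, 0 ≤ F a)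
    (a0 : A) (h0 : 0 < F a0) :
    ∃ c : SimpleCycle s t, ∀ a, cyc s t c a ≤ F a := by
  classical
  -- step lemma
  have hstep : ∀ a : A, 0 < F a → ∃ b : A, 0 < F b ∧ s b = t a := by
    intro a ha
    have h1 : 0 < ∑ x ∈ Finset.univ.filter (fun x => t x = t a), F x := by
      refine lt_of_lt_of_le ha ?_
      exact Finset.single_le_sum (fun x _ => hnn x) (by simp)
    rw [hdf (t a)] at h1
    by_contra hcon
    push_neg at hcon
    have : ∑ x ∈ Finset.univ.filter (fun x => s x = t a), F x ≤ 0 := by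
      refine Finset.sum_nonpos ?_
      intro x hx
      simp only [Finset.mem_filter, Finset.mem_univ, true_and] at hx
      by_contra hx2
      push_neg at hx2
      exact absurd hx (fun h => absurd (hcon x hx2) (fun h2 => h2 h))
    omega
  set P : A → Prop := fun a => 0 < F a with hP
  let g : {a // P a} → {a // P a} := fun p =>
    ⟨(hstep p.1 p.2).choose, (hstep p.1 p.2).choose_spec.1⟩
  have hg : ∀ p : {a // P a}, s (g p).1 = t p.1 := fun p => (hstep p.1 p.2).choose_spec.2
  let seq : ℕ → {a // P a} := fun k => g^[k] ⟨a0, h0⟩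
  have hseq : ∀ k : ℕ, s (seq (k+1)).1 = t (seq k).1 := by
    intro k
    have : seq (k+1) = g (seq k) := Function.iterate_succ_apply' g k _
    rw [this]; exact hg _
  let vs : ℕ → V := fun k => s (seq k).1
  -- pigeonhole
  obtain ⟨x, y, hxy, hv⟩ := Finite.exists_ne_map_eq_of_infinite vs
  have hex : ∃ k : ℕ, ∃ j : ℕ, j < k ∧ vs j = vs k := by
    rcases Nat.lt_or_ge x y with h | h
    · exact ⟨y, x, h, hv⟩
    · exact ⟨x, y, lt_of_le_of_ne h (Ne.symm hxy), hv.symm⟩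
  let K := Nat.find hex
  obtain ⟨J, hJK, hvJK⟩ : ∃ j : ℕ, j < K ∧ vs j = vs K := Nat.find_spec hex
  have hmin : ∀ p q : ℕ, p < q → q < K → vs p ≠ vs q := by
    intro p q hpq hqK heq
    exact absurd ⟨p, hpq, heq⟩ (Nat.find_min hex hqK)
  set n := K - J with hn
  have hn1 : 1 ≤ n := by omega
  have hKJ : K = J + n := by omega
  let arrows : List A := (List.range n).map (fun m => (seq (J + m)).1)
  have hlen : arrows.length = n := by simp [arrows]
  have hget : ∀ k : ℕ, ∀ hk : k < arrows.length, arrows.get ⟨k, hk⟩ = (seq (J + k)).1 := by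
    intro k hk
    simp [arrows]
  have hne : arrows ≠ [] := by
    intro h
    rw [h] at hlen; simp at hlen; omega
  refine ⟨⟨arrows, hne, ?_, ?_⟩, ?_⟩
  · intro k hk
    rw [hget, hget]
    have hkn : k < n := by rwa [hlen] at hk
    rcases Nat.lt_or_ge (k+1) n with h | h
    · rw [hlen]
      rw [Nat.mod_eq_of_lt (by omega)]
      exact (hseq (J + k)).symm.trans (by ring_nf)
    · have hk1 : k + 1 = n := by omega
      rw [hlen, hk1, Nat.mod_self]
      have e1 : t (seq (J + k)).1 = vs (J + k + 1) := (hseq (J+k)).symm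
      have e2 : J + k + 1 = K := by omega
      rw [e1, e2, ← hvJK]
      simp [vs]
  · -- nodup of sources
    have : arrows.map s = (List.range n).map (fun m => vs (J + m)) := by
      simp [arrows, vs, Function.comp]
    rw [this]
    refine List.Nodup.map_on ?_ List.nodup_range
    intro p hp q hq hpq
    simp only [List.mem_range] at hp hq
    by_contra hne2
    rcases Nat.lt_or_ge p q with h | h
    · exact hmin (J+p) (J+q) (by omega) (by omega) hpq
    · exact hmin (J+q) (J+p) (by omega) (by omega) hpq.symm
  · intro a
    unfold cyc
    split
    · next hmem =>
      simp only [arrows, List.mem_map, List.mem_range] at hmem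
      obtain ⟨m, _, hm⟩ := hmem
      have := (seq (J+m)).2
      rw [hm] at this
      omega
    · exact hnn a

lemma decomp (F : A → ℤ) (hdf : DivFree s t F) (hnn : ∀ a, 0 ≤ F a) :
    ∃ L : List (SimpleCycle s t), ∀ a, F a = (L.map (fun c => cyc s t c a)).sum := by
  classical
  obtain ⟨N, hN⟩ : ∃ N : ℕ, (∑ a : A, F a).toNat = N := ⟨_, rfl⟩
  induction N using Nat.strong_induction_on generalizing F with
  | _ N ih =>
    by_cases hz : ∀ a, F a = 0
    · exact ⟨[], fun a => by simp [hz a]⟩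
    · push_neg at hz
      obtain ⟨a0, ha0⟩ := hz
      have h0 : 0 < F a0 := lt_of_le_of_ne (hnn a0) (Ne.symm ha0)
      obtain ⟨c, hc⟩ := exists_cycle_le s t F hdf hnn a0 h0
      set F' : A → ℤ := fun a => F a - cyc s t c a with hF'
      have hnn' : ∀ a, 0 ≤ F' a := fun a => by simp [hF']; exact hc a
      have hdf' : DivFree s t F' := DivFree.sub s t hdf (cyc_divfree s t c)
      have hsum : ∑ a : A, F' a = (∑ a : A, F a) - c.arrows.length := by
        simp only [hF', Finset.sum_sub_distrib]
        rw [sum_cyc]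
      have hlp : 0 < c.arrows.length := List.length_pos_iff.mpr c.nonempty
      have hnnF : 0 ≤ ∑ a : A, F' a := Finset.sum_nonneg fun a _ => hnn' a
      have hlt : (∑ a : A, F' a).toNat < N := by
        rw [← hN]
        omega
      obtain ⟨L, hL⟩ := ih _ hlt F' hdf' hnn' rfl
      refine ⟨c :: L, fun a => ?_⟩
      have := hL a
      simp only [hF'] at this
      simp only [List.map_cons, List.sum_cons]
      omega

end Aux10

namespace Aux10
section lists
variable {A : Type} [DecidableEq A]

lemma sum_map_indicator (I : Finset A) (r : ℝ) (l : List A) :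
    (l.map (fun a => if a ∈ I then r else 0)).sum
      = r * ((l.filter (fun a => decide (a ∈ I))).length : ℝ) := by
  induction l with
  | nil => simp
  | cons x xs ih =>
    by_cases h : x ∈ I <;> simp [h, ih] <;> ring

lemma sum_map_const {X : Type} (L : List X) (f : X → ℝ) (r : ℝ) (h : ∀ c ∈ L, f c = r) :
    (L.map f).sum = (L.length : ℝ) * r := by
  induction L with
  | nil => simp
  | cons c L' ih =>
    simp only [List.map_cons, List.sum_cons, List.length_cons]
    rw [h c (by simp), ih (fun x hx => h x (by simp [hx]))]
    push_cast; ring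

lemma filter_insert_le (I : Finset A) (a : A) (l : List A) :
    (l.filter (fun x => decide (x ∈ insert a I))).length
      ≤ (l.filter (fun x => decide (x ∈ I))).length + l.count a := by
  induction l with
  | nil => simp
  | cons x xs ih =>
    rw [List.filter_cons, List.filter_cons, List.count_cons]
    have h1 : (x ∈ insert a I) ↔ (x = a ∨ x ∈ I) := Finset.mem_insert
    by_cases h : x ∈ insert a I
    · rw [if_pos (by simpa using h)]
      by_cases h2 : x ∈ I
      · rw [if_pos (by simpa using h2)]
        simp only [List.length_cons]
        omega
      · have hxa : x = a := by rw [h1] at h; tauto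
        rw [if_neg (by simpa using h2)]
        subst hxa
        simp only [List.length_cons, beq_self_eq_true, if_true]
        omega
    · have h2 : x ∉ I := fun hh => h (h1.mpr (Or.inr hh))
      rw [if_neg (by simpa using h), if_neg (by simpa using h2)]
      have hxa : x ≠ a := fun hh => h (h1.mpr (Or.inl hh))
      have hb : (x == a) = false := beq_eq_false_iff_ne.mpr hxa
      simp only [hb, Bool.false_eq_true, if_false]
      omega

lemma filter_insert_not_mem (I : Finset A) (a : A) (l : List A) (ha : a ∉ l) :
    l.filter (fun x => decide (x ∈ insert a I)) = l.filter (fun x => decide (x ∈ I)) := by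
  apply List.filter_congr
  intro x hx
  have hxa : x ≠ a := fun h => ha (h ▸ hx)
  simp [Finset.mem_insert, hxa]

end lists

variable {V A : Type} [Fintype V] [Fintype A] [DecidableEq V] [DecidableEq A] (s t : A → V)

lemma eval_list (L : List (SimpleCycle s t)) (g : A → ℝ) :
    ∑ b : A, (((L.map (fun c => cyc s t c b)).sum : ℤ) : ℝ) * g b
      = (L.map (fun c => (c.arrows.map g).sum)).sum := by
  induction L with
  | nil => simp
  | cons c L' ih =>
    simp only [List.map_cons, List.sum_cons]
    have h : ∀ b : A, (((cyc s t c b + (L'.map (fun c => cyc s t c b)).sum : ℤ)) : ℝ) * g b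
        = ((cyc s t c b : ℤ) : ℝ) * g b
          + ((((L'.map (fun c => cyc s t c b)).sum : ℤ)) : ℝ) * g b := by
      intro b; push_cast; ring
    rw [Finset.sum_congr rfl fun b _ => h b, Finset.sum_add_distrib, ih, sum_cyc_mul]

lemma eval_finset {ι : Type} (u : Finset ι) (W : ι → SimpleCycle s t) (g : A → ℝ) :
    ∑ b : A, (((∑ i ∈ u, cyc s t (W i) b : ℤ)) : ℝ) * g b
      = ∑ i ∈ u, ((W i).arrows.map g).sum := by
  have : ∀ b : A, (((∑ i ∈ u, cyc s t (W i) b : ℤ)) : ℝ) * g b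
      = ∑ i ∈ u, ((cyc s t (W i) b : ℤ) : ℝ) * g b := by
    intro b
    push_cast
    rw [Finset.sum_mul]
  rw [Finset.sum_congr rfl fun b _ => this b, Finset.sum_comm]
  exact Finset.sum_congr rfl fun i _ => sum_cyc_mul s t (W i) g

end Aux10

namespace Aux10
variable {V A : Type} [Fintype V] [Fintype A] [DecidableEq V] [DecidableEq A] (s t : A → V)

lemma two_to_three (R : A → ℝ) (hR : IsRCharge s t R) (I : Finset A)
    (hweak : IsWeakCut s t I)
    (hmax : ∀ I' : Finset A, IsWeakCut s t I' → I ⊆ I' → I' = I) :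
    IsCut s t I := by
  classical
  intro w0
  rcases Nat.lt_or_ge (w0.arrows.filter (fun a => decide (a ∈ I))).length 1 with hlt | hge
  swap
  · exact le_antisymm (hweak w0) hge
  exfalso
  have h0 : (w0.arrows.filter (fun a => decide (a ∈ I))).length = 0 := by omega
  have hnotI : ∀ a ∈ w0.arrows, a ∉ I := by
    intro a ha haI
    have hmem : a ∈ w0.arrows.filter (fun a => decide (a ∈ I)) := by
      rw [List.mem_filter]
      exact ⟨ha, by simpa using haI⟩
    rw [List.length_eq_zero_iff] at h0
    rw [h0] at hmem
    simp at hmem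
  set J : Finset A := w0.arrows.toFinset with hJ
  have hJcard : J.card = w0.arrows.length := List.toFinset_card_of_nodup (arrows_nodup s t w0)
  have hU : ∀ a : {x // x ∈ J}, ∃ c : SimpleCycle s t,
      a.1 ∈ c.arrows ∧ (c.arrows.filter (fun x => decide (x ∈ I))).length = 1 := by
    rintro ⟨a, haJ⟩
    have haw : a ∈ w0.arrows := by rwa [hJ, List.mem_toFinset] at haJ
    have haI : a ∉ I := hnotI a haw
    have hnw : ¬ IsWeakCut s t (insert a I) := by
      intro hw
      have he := hmax (insert a I) hw (Finset.subset_insert a I)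
      exact haI (he ▸ Finset.mem_insert_self a I)
    rw [IsWeakCut] at hnw
    push_neg at hnw
    obtain ⟨u, hu⟩ := hnw
    have hu2 : 2 ≤ (u.arrows.filter (fun x => decide (x ∈ insert a I))).length := hu
    have hle := filter_insert_le I a u.arrows
    have hcount : u.arrows.count a ≤ 1 :=
      List.nodup_iff_count_le_one.mp (arrows_nodup s t u) a
    have hwu := hweak u
    have hmem : a ∈ u.arrows := by
      by_contra hmem
      rw [filter_insert_not_mem I a u.arrows hmem] at hu2
      omega
    exact ⟨u, hmem, by omega⟩
  let U : {x // x ∈ J} → SimpleCycle s t := fun a => (hU a).choose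
  have hUmem : ∀ a, a.1 ∈ (U a).arrows := fun a => (hU a).choose_spec.1
  have hUone : ∀ a, ((U a).arrows.filter (fun x => decide (x ∈ I))).length = 1 :=
    fun a => (hU a).choose_spec.2
  set F : A → ℤ := fun b => (∑ a ∈ J.attach, cyc s t (U a) b) - cyc s t w0 b with hF
  have hnn : ∀ b, 0 ≤ F b := by
    intro b
    by_cases hb : b ∈ w0.arrows
    · have hbJ : b ∈ J := by rwa [hJ, List.mem_toFinset]
      have h1 : (1:ℤ) ≤ ∑ a ∈ J.attach, cyc s t (U a) b := by
        have hmm : cyc s t (U ⟨b, hbJ⟩) b = 1 := by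
          unfold cyc; rw [if_pos (hUmem ⟨b, hbJ⟩)]
        calc (1:ℤ) = cyc s t (U ⟨b,hbJ⟩) b := hmm.symm
          _ ≤ ∑ a ∈ J.attach, cyc s t (U a) b :=
            Finset.single_le_sum (fun a _ => cyc_nonneg s t (U a) b) (Finset.mem_attach _ _)
      have h2 : cyc s t w0 b ≤ 1 := cyc_le_one s t w0 b
      simp only [hF]; omega
    · have h2 : cyc s t w0 b = 0 := by unfold cyc; rw [if_neg hb]
      simp only [hF, h2, sub_zero]
      exact Finset.sum_nonneg fun a _ => cyc_nonneg s t (U a) b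
  have hdf : DivFree s t F :=
    DivFree.sub s t
      (DivFree.finsetSum s t J.attach _ (fun a _ => cyc_divfree s t (U a)))
      (cyc_divfree s t w0)
  obtain ⟨L, hL⟩ := decomp s t F hdf hnn
  have keyval : ∀ g : A → ℝ,
      (∑ a ∈ J.attach, ((U a).arrows.map g).sum) - (w0.arrows.map g).sum
        = (L.map (fun c => (c.arrows.map g).sum)).sum := by
    intro g
    have e1 : ∀ b : A, ((F b : ℤ) : ℝ) * g b
        = ((∑ a ∈ J.attach, cyc s t (U a) b : ℤ) : ℝ) * g b
          - ((cyc s t w0 b : ℤ) : ℝ) * g b := by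
      intro b; simp only [hF]; push_cast; ring
    have e2 : ∑ b : A, ((F b : ℤ) : ℝ) * g b
        = (∑ a ∈ J.attach, ((U a).arrows.map g).sum) - (w0.arrows.map g).sum := by
      rw [Finset.sum_congr rfl fun b _ => e1 b, Finset.sum_sub_distrib,
          eval_finset s t J.attach U g, sum_cyc_mul s t w0 g]
    have e3 : ∑ b : A, ((F b : ℤ) : ℝ) * g b
        = (L.map (fun c => (c.arrows.map g).sum)).sum := by
      rw [Finset.sum_congr rfl (fun b _ => by rw [hL b]), eval_list s t L g]
    rw [← e2, e3]
  set n : ℕ := w0.arrows.length with hn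
  have hn1 : 1 ≤ n := List.length_pos_iff.mpr w0.nonempty
  -- apply with R
  have hRval := keyval R
  rw [Finset.sum_congr rfl (fun a _ => hR (U a)), hR w0, Finset.sum_const,
      Finset.card_attach, hJcard] at hRval
  rw [sum_map_const L _ 2 (fun c _ => hR c)] at hRval
  -- apply with indicator of I
  set χ : A → ℝ := fun a => if a ∈ I then (1:ℝ) else 0 with hχ
  have hχval := keyval χ
  have hχu : ∀ a : {x // x ∈ J}, ((U a).arrows.map χ).sum = 1 := by
    intro a
    rw [hχ, sum_map_indicator I 1 (U a).arrows, hUone a]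
    simp
  have hχw0 : (w0.arrows.map χ).sum = 0 := by
    rw [hχ, sum_map_indicator I 1 w0.arrows, h0]
    simp
  rw [Finset.sum_congr rfl (fun a _ => hχu a), hχw0, Finset.sum_const,
      Finset.card_attach, hJcard] at hχval
  have hχL : (L.map (fun c => (c.arrows.map χ).sum)).sum ≤ (L.length : ℝ) := by
    have hb : ∀ x ∈ L.map (fun c => (c.arrows.map χ).sum), x ≤ (1:ℝ) := by
      intro x hx
      rw [List.mem_map] at hx
      obtain ⟨c, _, rfl⟩ := hx
      rw [hχ, sum_map_indicator I 1 c.arrows]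
      have := hweak c
      simp only [one_mul]
      exact_mod_cast this
    calc (L.map (fun c => (c.arrows.map χ).sum)).sum
        ≤ (L.map (fun c => (c.arrows.map χ).sum)).length • (1:ℝ) :=
          List.sum_le_card_nsmul _ _ hb
      _ = (L.length : ℝ) := by simp
  rw [← hχval] at hχL
  -- contradiction
  simp only [nsmul_eq_mul, mul_one, sub_zero] at hRval hχL
  have hcast : (1:ℝ) ≤ (n:ℝ) := by exact_mod_cast hn1
  nlinarith [hRval, hχL, hcast]

end Aux10


/-- The following are equivalent: the quiver admits a cut; it admits an R-charge;
every maximal weak cut is a cut. -/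
theorem stmt10 {V A : Type} [Fintype V] [Fintype A] [DecidableEq V] [DecidableEq A]
    (s t : A → V) :
    List.TFAE [
      ∃ I : Finset A, IsCut s t I,
      ∃ R : A → ℝ, IsRCharge s t R,
      ∀ I : Finset A, IsWeakCut s t I →
        (∀ I' : Finset A, IsWeakCut s t I' → I ⊆ I' → I' = I) → IsCut s t I] := by
  tfae_have 1 → 2 := by
    rintro ⟨I, hI⟩
    refine ⟨fun a => if a ∈ I then (2:ℝ) else 0, fun w => ?_⟩
    rw [Aux10.sum_map_indicator I 2 w.arrows, hI w]
    norm_num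
  tfae_have 2 → 3 := by
    rintro ⟨R, hR⟩ I hweak hmax
    exact Aux10.two_to_three s t R hR I hweak hmax
  tfae_have 3 → 1 := by
    intro h3
    have hfin : {I : Finset A | IsWeakCut s t I}.Finite := Set.toFinite _
    have hne : {I : Finset A | IsWeakCut s t I}.Nonempty := ⟨∅, fun w => by simp⟩
    obtain ⟨I, hI, hImax⟩ := Set.Finite.exists_maximalFor Finset.card _ hfin hne
    refine ⟨I, h3 I hI ?_⟩
    intro I' hI' hsub
    exact (Finset.eq_of_subset_of_card_le hsub
      (hImax hI' (Finset.card_le_card hsub))).symm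
  tfae_finish
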